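/- The function f satisfies the recurrence f(1) = 1 and, for all i ≥ 0 and all j with 1 ≤ j ≤ 2^i: f(2^i + j) = f(j) + 1 if 1 ≤ j ≤ i, and f(2^i + j) = f(j) if i + 1 ≤ j ≤ 2^i. -/

import Mathlib

/-- `f n` is the number of integers `k` with `1 ≤ k ≤ n` such that `k ≡ n (mod 2^k)`. -/
def f (n : ℕ) : ℕ := ((Finset.Icc 1 n).filter (fun k => n % 2 ^ k = k % 2 ^ k)).card

lemma aux_mod_eq_iff (n k : ℕ) (hk1 : 1 ≤ k) (hn : n ≤ 2 ^ k) :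
    n % 2 ^ k = k % 2 ^ k ↔ k = n := by
  have hk : k < 2 ^ k := Nat.lt_two_pow_self (n := k)
  rw [Nat.mod_eq_of_lt hk]
  rcases lt_or_eq_of_le hn with h | h
  · rw [Nat.mod_eq_of_lt h]; omega
  · subst h
    simp only [Nat.mod_self]
    omega

lemma aux_filter_high (i n : ℕ) (h1 : i < n) (h2 : n ≤ 2 ^ (i + 1)) :
    (Finset.Icc (i + 1) n).filter (fun k => n % 2 ^ k = k % 2 ^ k) = {n} := by
  ext k
  simp only [Finset.mem_filter, Finset.mem_Icc, Finset.mem_singleton]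
  constructor
  · rintro ⟨⟨hk1, hk2⟩, hc⟩
    exact (aux_mod_eq_iff n k (by omega)
      (le_trans h2 (Nat.pow_le_pow_right (by norm_num) hk1))).mp hc
  · rintro rfl
    exact ⟨⟨by omega, le_refl _⟩, rfl⟩

lemma aux_f_split (i n : ℕ) (h1 : i < n) (h2 : n ≤ 2 ^ (i + 1)) :
    f n = ((Finset.Icc 1 i).filter (fun k => n % 2 ^ k = k % 2 ^ k)).card + 1 := by
  unfold f
  have hU : Finset.Icc 1 n = Finset.Icc 1 i ∪ Finset.Icc (i + 1) n := by
    ext k; simp only [Finset.mem_Icc, Finset.mem_union]; omega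
  have hdisj : Disjoint ((Finset.Icc 1 i).filter (fun k => n % 2 ^ k = k % 2 ^ k))
      ({n} : Finset ℕ) := by
    simp only [Finset.disjoint_singleton_right, Finset.mem_filter, Finset.mem_Icc]
    intro h
    omega
  rw [hU, Finset.filter_union, aux_filter_high i n h1 h2,
    Finset.card_union_of_disjoint hdisj, Finset.card_singleton]

lemma aux_mod_low (i j k : ℕ) (hk : k ≤ i) : (2 ^ i + j) % 2 ^ k = j % 2 ^ k := by
  obtain ⟨c, hc⟩ := pow_dvd_pow 2 hk
  rw [hc, Nat.mul_add_mod]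

theorem f_recurrence :
    f 1 = 1 ∧ ∀ i j : ℕ, 1 ≤ j → j ≤ 2 ^ i →
      (j ≤ i → f (2 ^ i + j) = f j + 1) ∧
      (i + 1 ≤ j → f (2 ^ i + j) = f j) := by
  constructor
  · decide
  intro i j hj1 hj2
  have hpow : j ≤ 2 ^ i := hj2
  have hin : i < 2 ^ i + j := lt_of_lt_of_le (Nat.lt_two_pow_self (n := i)) (Nat.le_add_right _ _)
  have hle : 2 ^ i + j ≤ 2 ^ (i + 1) := by rw [pow_succ]; omega
  have hsplit := aux_f_split i (2 ^ i + j) hin hle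
  have hcongr : (Finset.Icc 1 i).filter (fun k => (2 ^ i + j) % 2 ^ k = k % 2 ^ k)
      = (Finset.Icc 1 i).filter (fun k => j % 2 ^ k = k % 2 ^ k) := by
    apply Finset.filter_congr
    intro k hk
    simp only [Finset.mem_Icc] at hk
    rw [aux_mod_low i j k hk.2]
  rw [hcongr] at hsplit
  constructor
  · intro hji
    -- case j ≤ i : f j equals the filtered card over Icc 1 i
    have hfj : f j = ((Finset.Icc 1 i).filter (fun k => j % 2 ^ k = k % 2 ^ k)).card := by
      unfold f
      congr 1
      ext k
      simp only [Finset.mem_filter, Finset.mem_Icc]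
      constructor
      · rintro ⟨⟨h1, h2⟩, hc⟩
        exact ⟨⟨h1, le_trans h2 hji⟩, hc⟩
      · rintro ⟨⟨h1, h2⟩, hc⟩
        refine ⟨⟨h1, ?_⟩, hc⟩
        by_contra hlt
        push_neg at hlt
        have hk2 : k < 2 ^ k := Nat.lt_two_pow_self (n := k)
        have hj2k : j < 2 ^ k := lt_of_lt_of_le hlt (le_of_lt hk2)
        rw [Nat.mod_eq_of_lt hj2k, Nat.mod_eq_of_lt hk2] at hc
        omega
    rw [hsplit, hfj]
  · intro hij
    have hsplit2 := aux_f_split i j (by omega)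
      (le_trans hpow (Nat.pow_le_pow_right (by norm_num) (Nat.le_succ i)))
    rw [hsplit, hsplit2]
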